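/- Given a map c : X → TX in A that is the equalizer of T(c), T(η) : TX ⇉ T²X, the map a := (equalizer factorization of μ ∘ T(c) through c) defines a T-algebra structure a : TX → X, and c is a T̄-coalgebra on this algebra. -/
import Mathlib


open CategoryTheory CategoryTheory.Limits

/-- Given a map `c : X → TX` which is the equalizer of `T(c), T(η) : TX ⇉ T²X`, the
factorization `a : TX → X` of `μ ∘ T(c)` through the equalizer `c` (i.e. the map with
`c ∘ a = μ ∘ T(c)`) is a `T`-algebra structure on `X`, and `c` is a `T̄`-coalgebra on
this algebra (it is a map of algebras, satisfies `a ∘ c = id`, and the coassociativity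
equation `T(η) ∘ c = T(c) ∘ c` holds by assumption). -/
theorem bases_as_coalgebras_stmt3 {A : Type u} [Category.{v} A] (T : Monad A) (X : A)
    (c : X ⟶ T.obj X)
    (hw : c ≫ T.map c = c ≫ T.map (T.η.app X))
    (hl : IsLimit (Fork.ofι c hw)) :
    ∃ a : T.obj X ⟶ X,
      -- `a` is the equalizer factorization of `μ ∘ T(c)` through `c`,
      -- equivalently `c` is a morphism of algebras `a → μ`:
      a ≫ c = T.map c ≫ T.μ.app X ∧
      -- `a` is a `T`-algebra structure:
      T.η.app X ≫ a = 𝟙 X ∧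
      T.map a ≫ a = T.μ.app X ≫ a ∧
      -- `c` is a `T̄`-coalgebra on this algebra:
      c ≫ a = 𝟙 X := by
  have w : (T.map c ≫ T.μ.app X) ≫ T.map c = (T.map c ≫ T.μ.app X) ≫ T.map (T.η.app X) := by
    have h1 : T.μ.app X ≫ T.map c = T.map (T.map c) ≫ T.μ.app (T.obj X) := (T.μ.naturality c).symm
    have h2 : T.μ.app X ≫ T.map (T.η.app X) = T.map (T.map (T.η.app X)) ≫ T.μ.app (T.obj X) :=
      (T.μ.naturality (T.η.app X)).symm
    rw [Category.assoc, Category.assoc, h1, h2, ← Category.assoc, ← Category.assoc,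
      ← T.map_comp, ← T.map_comp, hw]
  refine ⟨hl.lift (Fork.ofι (T.map c ≫ T.μ.app X) w), ?_, ?_, ?_, ?_⟩ <;>
    [skip;
     apply Fork.IsLimit.hom_ext hl;
     apply Fork.IsLimit.hom_ext hl;
     apply Fork.IsLimit.hom_ext hl]
  · exact hl.fac _ WalkingParallelPair.zero
  · have fac : hl.lift (Fork.ofι (T.map c ≫ T.μ.app X) w) ≫ c = T.map c ≫ T.μ.app X :=
      hl.fac _ WalkingParallelPair.zero
    simp only [Fork.ofι_pt, Fork.ι_ofι, Category.assoc, Category.id_comp, fac]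
    rw [← Category.assoc, ← T.η.naturality c]
    simp
  · have fac : hl.lift (Fork.ofι (T.map c ≫ T.μ.app X) w) ≫ c = T.map c ≫ T.μ.app X :=
      hl.fac _ WalkingParallelPair.zero
    simp only [Fork.ofι_pt, Fork.ι_ofι, Category.assoc, fac]
    rw [← Category.assoc, ← T.map_comp, fac, T.map_comp, Category.assoc, T.assoc,
      ← Category.assoc (T.map (T.map c))]
    have := T.μ.naturality c
    simp only [Functor.comp_map] at this
    rw [this]
    simp
  · have fac : hl.lift (Fork.ofι (T.map c ≫ T.μ.app X) w) ≫ c = T.map c ≫ T.μ.app X :=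
      hl.fac _ WalkingParallelPair.zero
    simp only [Fork.ofι_pt, Fork.ι_ofι, Category.assoc, Category.id_comp, fac]
    rw [← Category.assoc, hw, Category.assoc]
    simp
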